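/- Let G be a finite group and H₁ ≤ H ≤ G subgroups with H₁ a proper subgroup of H. Then the kernel of the G-action on the induced module Ind_H^G ω(H/H₁)_ℚ is a normal subgroup of G contained in H₁. In particular, if H₁ contains no nontrivial normal subgroup of G, then G acts faithfully on Ind_H^G ω(H/H₁)_ℚ. -/

import Mathlib

/-- The function model of the induced module `Ind_H^G ω(H/H₁)_ℚ = ℚ[G] ⊗_{ℚ[H]} ω(H/H₁)_ℚ`
(for a finite group these are canonically isomorphic): `f : G → ℚ[H/H₁]` belongs to the
induced module iff every value `f x` lies in `ω(H/H₁)_ℚ` (the kernel of the augmentation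
`ℚ[H/H₁] → ℚ`) and `f (x·h) = h⁻¹ • (f x)` for all `x ∈ G`, `h ∈ H`.  The `G`-action on
this module is `(g • f) x = f (g⁻¹ x)`. -/
def MemInducedOmega {G : Type*} [Group G] (H H₁ : Subgroup G)
    (f : G → ((H ⧸ H₁.subgroupOf H) →₀ ℚ)) : Prop :=
  (∀ x : G,
      Finsupp.linearCombination ℚ (fun _ : H ⧸ H₁.subgroupOf H => (1 : ℚ)) (f x) = 0)
  ∧ ∀ (x : G) (h : H), f (x * h) =
      (Representation.ofMulAction ℚ H (H ⧸ H₁.subgroupOf H) h⁻¹ (MonoidAlgebra.ofCoeff (f x))).coeff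

/-- Let `G` be a finite group and `H₁ ≤ H ≤ G` subgroups with `H₁` a
proper subgroup of `H`.  Then the kernel of the `G`-action on the induced module
`Ind_H^G ω(H/H₁)_ℚ` (realized by its function model `MemInducedOmega` inside
`G → ℚ[H/H₁]`, with `G` acting by `(g • f) x = f (g⁻¹ x)`) is a normal subgroup of `G`
contained in `H₁`.  In particular, if `H₁` contains no nontrivial normal subgroup of `G`
(its normal core is trivial), then `G` acts faithfully on `Ind_H^G ω(H/H₁)_ℚ`. -/
theorem induced_kernel_in_core {G : Type*} [Group G] [Finite G]
    (H H₁ : Subgroup G) (h₁ : H₁ < H) :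
    (∃ S : Subgroup G, S.Normal ∧ S ≤ H₁ ∧
      (S : Set G) = {x : G | ∀ f : G → ((H ⧸ H₁.subgroupOf H) →₀ ℚ),
        MemInducedOmega H H₁ f → (fun y => f (x⁻¹ * y)) = f})
    ∧ (H₁.normalCore = ⊥ →
        ∀ x : G, (∀ f : G → ((H ⧸ H₁.subgroupOf H) →₀ ℚ),
          MemInducedOmega H H₁ f → (fun y => f (x⁻¹ * y)) = f) → x = 1) := by
  classical
  obtain ⟨a, haH, haH₁⟩ := SetLike.exists_of_lt h₁
  set a' : H := ⟨a, haH⟩ with ha'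
  -- the kernel as a subgroup
  set K : Subgroup G :=
    { carrier := {x : G | ∀ f : G → ((H ⧸ H₁.subgroupOf H) →₀ ℚ),
        MemInducedOmega H H₁ f → (fun y => f (x⁻¹ * y)) = f}
      one_mem' := by intro f hf; simp
      mul_mem' := by
        intro x z hx hz f hf
        funext y
        have h1 := congr_fun (hz f hf) (x⁻¹ * y)
        have h2 := congr_fun (hx f hf) y
        simpa [mul_assoc] using h1.trans h2
      inv_mem' := by
        intro x hx f hf
        funext y
        have := congr_fun (hx f hf) (x * y)
        simpa [mul_assoc] using this.symm } with hK
  have hKnormal : K.Normal := by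
    constructor
    intro x hx g f hf
    have hf' : MemInducedOmega H H₁ (fun y => f (g * y)) := by
      refine ⟨fun y => hf.1 (g * y), fun y h => ?_⟩
      have := hf.2 (g * y) h
      simpa [mul_assoc] using this
    have h1 := hx _ hf'
    funext y
    have := congr_fun h1 (g⁻¹ * y)
    calc f ((g * x * g⁻¹)⁻¹ * y) = f (g * (x⁻¹ * (g⁻¹ * y))) := by
          group
      _ = f (g * (g⁻¹ * y)) := this
      _ = f y := by group
  -- the test function
  set f₀ : G → ((H ⧸ H₁.subgroupOf H) →₀ ℚ) := fun x =>
    if hx : x ∈ H then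
      Finsupp.single (QuotientGroup.mk ((⟨x, hx⟩ : H)⁻¹)) 1
        - Finsupp.single (QuotientGroup.mk ((⟨x, hx⟩ : H)⁻¹ * a')) 1
    else 0 with hf₀def
  have hf₀ : MemInducedOmega H H₁ f₀ := by
    constructor
    · intro x
      by_cases hx : x ∈ H
      · simp [hf₀def, hx, Finsupp.linearCombination_single]
      · simp [hf₀def, hx]
    · intro x h
      by_cases hx : x ∈ H
      · have hxh : x * h ∈ H := mul_mem hx h.2
        have hsub : (⟨x * (h : G), hxh⟩ : H) = ⟨x, hx⟩ * h := rfl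
        simp only [hf₀def, dif_pos hx, dif_pos hxh, hsub, MonoidAlgebra.ofCoeff_sub, MonoidAlgebra.ofCoeff_single, map_sub,
          MonoidAlgebra.coeff_sub, MonoidAlgebra.coeff_single,
          Representation.ofMulAction_single, MulAction.Quotient.smul_mk,
          smul_eq_mul, mul_inv_rev, mul_assoc]
      · have hxh : ¬ x * h ∈ H := by
          intro hc
          exact hx (by simpa using mul_mem hc (inv_mem h.2))
        simp [hf₀def, hx, hxh]
  have hne : (QuotientGroup.mk (1 : H) : H ⧸ H₁.subgroupOf H) ≠ QuotientGroup.mk a' := by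
    intro hc
    rw [QuotientGroup.eq] at hc
    simp only [inv_one, one_mul] at hc
    exact haH₁ hc
  -- K ≤ H₁
  have hKle : K ≤ H₁ := by
    intro x hx
    have h1 := congr_fun (hx f₀ hf₀) 1
    simp only [mul_one] at h1
    -- f₀ 1
    have hone : f₀ 1 = Finsupp.single (QuotientGroup.mk (1 : H)) 1
        - Finsupp.single (QuotientGroup.mk a') 1 := by
      have h1H : (1 : G) ∈ H := one_mem H
      have e1 : (⟨(1 : G), h1H⟩ : H) = 1 := rfl
      simp only [hf₀def, dif_pos h1H, e1, inv_one, one_mul]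
    by_cases hxH : x⁻¹ ∈ H
    · rw [hone] at h1
      simp only [hf₀def, dif_pos hxH] at h1
      have hx1 : (QuotientGroup.mk ((⟨x⁻¹, hxH⟩ : H)⁻¹) : H ⧸ H₁.subgroupOf H)
          = QuotientGroup.mk 1 := by
        by_contra hne2
        have h2 := DFunLike.congr_fun h1 (QuotientGroup.mk (1 : H))
        simp only [Finsupp.sub_apply, Finsupp.single_apply, if_neg hne2,
          if_neg (Ne.symm hne)] at h2
        split_ifs at h2 <;> norm_num at h2
      rw [QuotientGroup.eq] at hx1
      simp only [inv_inv, mul_one, Subgroup.mem_subgroupOf] at hx1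
      simpa using inv_mem hx1
    · exfalso
      rw [hone] at h1
      simp only [hf₀def, dif_neg hxH] at h1
      have h2 := DFunLike.congr_fun h1 (QuotientGroup.mk (1 : H))
      simp only [Finsupp.zero_apply, Finsupp.sub_apply, Finsupp.single_apply,
        if_neg (Ne.symm hne)] at h2
      split_ifs at h2 <;> norm_num at h2
  refine ⟨⟨K, hKnormal, hKle, rfl⟩, fun hcore x hx => ?_⟩
  have : K ≤ H₁.normalCore := Subgroup.normal_le_normalCore.mpr hKle
  have hxK : x ∈ K := hx
  have := this hxK
  rw [hcore] at this
  simpa using this
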